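/- For every integer k ≥ 2 there exists a connected graph G with fes(G) = k and MEG(G) = 3k + |L(G)|, where |L(G)| is the number of leaves of G. -/

import Mathlib

open SimpleGraph

/-- Two vertices `x` and `y` monitor an edge `e` in `G`: there is a shortest path between
them, and `e` lies on every shortest path between `x` and `y`. -/
def Monitors {V : Type*} (G : SimpleGraph V) (x y : V) (e : Sym2 V) : Prop :=
  (∃ p : G.Walk x y, p.IsPath ∧ p.length = G.dist x y) ∧
    ∀ p : G.Walk x y, p.IsPath → p.length = G.dist x y → e ∈ p.edges

/-- `S` is a monitoring edge-geodetic set of `G`. -/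
def IsMEGSet {V : Type*} (G : SimpleGraph V) (S : Set V) : Prop :=
  ∀ e ∈ G.edgeSet, ∃ x ∈ S, ∃ y ∈ S, Monitors G x y e

/-- The minimum size of a monitoring edge-geodetic set of `G`. -/
noncomputable def megNum {V : Type*} (G : SimpleGraph V) : ℕ :=
  sInf {n | ∃ S : Set V, IsMEGSet G S ∧ S.ncard = n}

/-- The set of leaves (degree-1 vertices) of `G`. -/
def leaves {V : Type*} (G : SimpleGraph V) : Set V :=
  {v | (G.neighborSet v).ncard = 1}


/-- The feedback edge set number (cyclomatic number) of `G`. -/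
noncomputable def fes {V : Type*} (G : SimpleGraph V) : ℕ :=
  sInf {n | ∃ F : Set (Sym2 V), F ⊆ G.edgeSet ∧ (G.deleteEdges F).IsAcyclic ∧ F.ncard = n}


namespace MEGC

inductive Vtx (k : ℕ) : Type
  | c : Vtx k
  | a : Fin k → Vtx k
  | m : Fin k → Vtx k
  | b : Fin k → Vtx k
  deriving DecidableEq

namespace Vtx

def enc {k : ℕ} : Vtx k ≃ Option (Fin k ⊕ Fin k ⊕ Fin k) where
  toFun v := match v with
    | .c => none
    | .a i => some (Sum.inl i)
    | .m i => some (Sum.inr (Sum.inl i))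
    | .b i => some (Sum.inr (Sum.inr i))
  invFun o := match o with
    | none => .c
    | some (Sum.inl i) => .a i
    | some (Sum.inr (Sum.inl i)) => .m i
    | some (Sum.inr (Sum.inr i)) => .b i
  left_inv v := by cases v <;> rfl
  right_inv o := by rcases o with _ | (i | i | i) <;> rfl

instance {k : ℕ} : Fintype (Vtx k) := Fintype.ofEquiv _ enc.symm

lemma card_vtx (k : ℕ) : Fintype.card (Vtx k) = 3 * k + 1 := by
  rw [Fintype.card_congr (enc (k := k))]
  simp
  omega

def Eb {k : ℕ} : Vtx k → Vtx k → Bool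
  | .c, .a _ => true
  | .a _, .c => true
  | .c, .b _ => true
  | .b _, .c => true
  | .a i, .m j => decide (i = j)
  | .m i, .a j => decide (i = j)
  | .m i, .b j => decide (i = j)
  | .b i, .m j => decide (i = j)
  | _, _ => false

end Vtx

def G (k : ℕ) : SimpleGraph (Vtx k) where
  Adj x y := Vtx.Eb x y = true
  symm := by
    refine ⟨fun x y h => ?_⟩
    cases x <;> cases y <;> simp_all [Vtx.Eb] <;> omega
  loopless := by
    refine ⟨fun x h => ?_⟩
    cases x <;> simp_all [Vtx.Eb]

namespace Vtx

variable {k : ℕ}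

lemma adj_c {v : Vtx k} : (G k).Adj .c v ↔ (∃ i, v = .a i) ∨ (∃ i, v = .b i) := by
  cases v <;> simp [G, Eb]

lemma adj_a {i : Fin k} {v : Vtx k} : (G k).Adj (.a i) v ↔ v = .c ∨ v = .m i := by
  cases v <;> simp [G, Eb] <;> exact eq_comm

lemma adj_m {i : Fin k} {v : Vtx k} : (G k).Adj (.m i) v ↔ v = .a i ∨ v = .b i := by
  cases v <;> simp [G, Eb] <;> exact eq_comm

lemma adj_b {i : Fin k} {v : Vtx k} : (G k).Adj (.b i) v ↔ v = .c ∨ v = .m i := by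
  cases v <;> simp [G, Eb] <;> exact eq_comm

@[simp] lemma adj_ca {i : Fin k} : (G k).Adj .c (.a i) := by simp [adj_c]
@[simp] lemma adj_cb {i : Fin k} : (G k).Adj .c (.b i) := by simp [adj_c]
@[simp] lemma adj_am {i : Fin k} : (G k).Adj (.a i) (.m i) := by simp [adj_a]
@[simp] lemma adj_mb {i : Fin k} : (G k).Adj (.m i) (.b i) := by simp [adj_m]
@[simp] lemma adj_ac {i : Fin k} : (G k).Adj (.a i) .c := by simp [adj_a]
@[simp] lemma adj_bc {i : Fin k} : (G k).Adj (.b i) .c := by simp [adj_b]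
@[simp] lemma adj_ma {i : Fin k} : (G k).Adj (.m i) (.a i) := by simp [adj_m]
@[simp] lemma adj_bm {i : Fin k} : (G k).Adj (.b i) (.m i) := by simp [adj_b]

end Vtx

end MEGC
section Chunk2

namespace MEGC
namespace Vtx

variable {k : ℕ}

lemma reach_c (v : Vtx k) : (G k).Reachable v .c := by
  cases v with
  | c => exact Reachable.refl _
  | a i => exact ⟨adj_ac.toWalk⟩
  | m i => exact ⟨Walk.cons adj_ma (Walk.cons adj_ac Walk.nil)⟩
  | b i => exact ⟨adj_bc.toWalk⟩

lemma conn (k : ℕ) : (G k).Connected := by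
  rw [connected_iff]
  exact ⟨fun u v => (reach_c u).trans (reach_c v).symm, ⟨.c⟩⟩

lemma two_le_dist {x y : Vtx k} (hne : x ≠ y) (hnadj : ¬ (G k).Adj x y) :
    2 ≤ (G k).dist x y := by
  have h0 : 0 < (G k).dist x y := (conn k).pos_dist_of_ne hne
  have h1 : (G k).dist x y ≠ 1 := fun h => hnadj (dist_eq_one_iff_adj.mp h)
  omega

lemma le_dist_of_walks {x y : Vtx k} {t : ℕ}
    (h : ∀ p : (G k).Walk x y, t ≤ p.length) : t ≤ (G k).dist x y := by
  obtain ⟨p, hp⟩ := ((conn k).preconnected x y).exists_walk_length_eq_dist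
  exact hp ▸ h p

lemma d_ca {i : Fin k} : (G k).dist .c (.a i) = 1 := dist_eq_one_iff_adj.mpr adj_ca
lemma d_cb {i : Fin k} : (G k).dist .c (.b i) = 1 := dist_eq_one_iff_adj.mpr adj_cb
lemma d_am_same {i : Fin k} : (G k).dist (.a i) (.m i) = 1 := dist_eq_one_iff_adj.mpr adj_am
lemma d_mb_same {i : Fin k} : (G k).dist (.m i) (.b i) = 1 := dist_eq_one_iff_adj.mpr adj_mb

lemma d_cm {i : Fin k} : (G k).dist .c (.m i) = 2 := by
  refine le_antisymm (le_trans (dist_le (Walk.cons adj_ca (Walk.cons adj_am Walk.nil))) (by simp))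
    (two_le_dist (by simp) (by rw [adj_c]; simp))

lemma d_ab {i j : Fin k} : (G k).dist (.a i) (.b j) = 2 := by
  refine le_antisymm (le_trans (dist_le (Walk.cons adj_ac (Walk.cons adj_cb Walk.nil))) (by simp))
    (two_le_dist (by simp) (by rw [adj_a]; simp))

lemma d_aa {i j : Fin k} (hij : i ≠ j) : (G k).dist (.a i) (.a j) = 2 := by
  refine le_antisymm (le_trans (dist_le (Walk.cons adj_ac (Walk.cons adj_ca Walk.nil))) (by simp))
    (two_le_dist (by simp [hij]) (by rw [adj_a]; simp))

lemma d_bb {i j : Fin k} (hij : i ≠ j) : (G k).dist (.b i) (.b j) = 2 := by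
  refine le_antisymm (le_trans (dist_le (Walk.cons adj_bc (Walk.cons adj_cb Walk.nil))) (by simp))
    (two_le_dist (by simp [hij]) (by rw [adj_b]; simp))

lemma three_le_walk_am {i j : Fin k} (hij : i ≠ j) (p : (G k).Walk (.a i) (.m j)) :
    3 ≤ p.length := by
  cases p with
  | cons h1 q =>
    cases q with
    | nil => rw [adj_a] at h1; simp_all
    | cons h2 q2 =>
      cases q2 with
      | nil =>
        rw [adj_a] at h1
        rcases h1 with rfl | rfl
        · rw [adj_c] at h2; simp at h2
        · rw [adj_m] at h2; simp_all
      | cons h3 q3 => simp [Walk.length_cons]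

lemma d_am {i j : Fin k} (hij : i ≠ j) : (G k).dist (.a i) (.m j) = 3 := by
  refine le_antisymm
    (le_trans (dist_le (Walk.cons adj_ac (Walk.cons adj_cb (Walk.cons adj_bm Walk.nil)))) (by simp))
    (le_dist_of_walks (three_le_walk_am hij))

lemma three_le_walk_bm {i j : Fin k} (hij : i ≠ j) (p : (G k).Walk (.b i) (.m j)) :
    3 ≤ p.length := by
  cases p with
  | cons h1 q =>
    cases q with
    | nil => rw [adj_b] at h1; simp_all
    | cons h2 q2 =>
      cases q2 with
      | nil =>
        rw [adj_b] at h1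
        rcases h1 with rfl | rfl
        · rw [adj_c] at h2; simp at h2
        · rw [adj_m] at h2; simp_all
      | cons h3 q3 => simp [Walk.length_cons]

lemma d_bm {i j : Fin k} (hij : i ≠ j) : (G k).dist (.b i) (.m j) = 3 := by
  refine le_antisymm
    (le_trans (dist_le (Walk.cons adj_bc (Walk.cons adj_cb (Walk.cons adj_bm Walk.nil)))) (by simp))
    (le_dist_of_walks (three_le_walk_bm hij))

lemma four_le_walk_mm {i j : Fin k} (hij : i ≠ j) (p : (G k).Walk (.m i) (.m j)) :
    4 ≤ p.length := by
  cases p with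
  | nil => exact absurd rfl hij
  | cons h1 q =>
    rw [adj_m] at h1
    rcases h1 with rfl | rfl
    · have := three_le_walk_am hij q; simp [Walk.length_cons]; omega
    · have := three_le_walk_bm hij q; simp [Walk.length_cons]; omega

lemma d_mm {i j : Fin k} (hij : i ≠ j) : (G k).dist (.m i) (.m j) = 4 := by
  refine le_antisymm
    (le_trans (dist_le (Walk.cons adj_ma (Walk.cons adj_ac
      (Walk.cons adj_cb (Walk.cons adj_bm Walk.nil))))) (by simp))
    (le_dist_of_walks (four_le_walk_mm hij))

end Vtx
end MEGC

end Chunk2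
section Chunk3

open SimpleGraph

lemma monitors_adj {V : Type*} {G : SimpleGraph V} {u v : V} (h : G.Adj u v) :
    Monitors G u v s(u, v) := by
  have hd : G.dist u v = 1 := dist_eq_one_iff_adj.mpr h
  constructor
  · exact ⟨(SimpleGraph.Path.singleton h).1, (SimpleGraph.Path.singleton h).2, by
      simp [hd, SimpleGraph.Path.singleton]⟩
  · intro p hp hl
    rw [hd] at hl
    cases p with
    | nil => simp at hl
    | cons h' q =>
      cases q with
      | nil => simp
      | cons h'' q' => simp [Walk.length_cons] at hl

namespace MEGC
namespace Vtx

variable {k : ℕ}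

lemma monitors_ab {i j : Fin k} (hij : i ≠ j) :
    Monitors (G k) (.a i) (.b j) s(.c, .a i) := by
  have hd : (G k).dist (.a i) (.b j) = 2 := d_ab
  constructor
  · refine ⟨Walk.cons adj_ac (Walk.cons adj_cb Walk.nil), ?_, by simp [hd]⟩
    simp [Walk.isPath_def]
  · intro p hp hl
    rw [hd] at hl
    cases p with
    | cons h1 q =>
      cases q with
      | nil => simp at hl
      | cons h2 q2 =>
        cases q2 with
        | nil =>
          rw [adj_a] at h1
          rcases h1 with rfl | rfl
          · simp [Sym2.eq_swap]
          · rw [adj_m] at h2; simp_all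
        | cons h3 q3 => simp [Walk.length_cons] at hl

lemma monitors_ba {i j : Fin k} (hij : i ≠ j) :
    Monitors (G k) (.b i) (.a j) s(.c, .b i) := by
  have hd : (G k).dist (.b i) (.a j) = 2 := by rw [dist_comm]; exact d_ab
  constructor
  · refine ⟨Walk.cons adj_bc (Walk.cons adj_ca Walk.nil), ?_, by simp [hd]⟩
    simp [Walk.isPath_def]
  · intro p hp hl
    rw [hd] at hl
    cases p with
    | cons h1 q =>
      cases q with
      | nil => simp at hl
      | cons h2 q2 =>
        cases q2 with
        | nil =>
          rw [adj_b] at h1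
          rcases h1 with rfl | rfl
          · simp [Sym2.eq_swap]
          · rw [adj_m] at h2; simp_all
        | cons h3 q3 => simp [Walk.length_cons] at hl

lemma isMEG (hk : 2 ≤ k) : IsMEGSet (G k) {v : Vtx k | v ≠ .c} := by
  have hnt : Nontrivial (Fin k) := Fin.nontrivial_iff_two_le.mpr hk
  intro e he
  induction e using Sym2.ind with
  | _ u v =>
    rw [mem_edgeSet] at he
    cases u with
    | c =>
      rw [adj_c] at he
      rcases he with ⟨i, rfl⟩ | ⟨i, rfl⟩
      · obtain ⟨j, hj⟩ := exists_ne i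
        exact ⟨.a i, by simp, .b j, by simp, monitors_ab (Ne.symm hj)⟩
      · obtain ⟨j, hj⟩ := exists_ne i
        exact ⟨.b i, by simp, .a j, by simp, monitors_ba (Ne.symm hj)⟩
    | a i =>
      rw [adj_a] at he
      rcases he with rfl | rfl
      · obtain ⟨j, hj⟩ := exists_ne i
        exact ⟨.a i, by simp, .b j, by simp, by rw [Sym2.eq_swap]; exact monitors_ab (Ne.symm hj)⟩
      · exact ⟨.a i, by simp, .m i, by simp, monitors_adj adj_am⟩
    | m i =>
      rw [adj_m] at he
      rcases he with rfl | rfl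
      · exact ⟨.m i, by simp, .a i, by simp, monitors_adj adj_ma⟩
      · exact ⟨.m i, by simp, .b i, by simp, monitors_adj adj_mb⟩
    | b i =>
      rw [adj_b] at he
      rcases he with rfl | rfl
      · obtain ⟨j, hj⟩ := exists_ne i
        exact ⟨.b i, by simp, .a j, by simp, by rw [Sym2.eq_swap]; exact monitors_ba (Ne.symm hj)⟩
      · exact ⟨.b i, by simp, .m i, by simp, monitors_adj adj_bm⟩

end Vtx
end MEGC

end Chunk3
section IsoInv

open SimpleGraph

variable {V W : Type*} {G : SimpleGraph V} {H : SimpleGraph W}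

lemma iso_dist_le (φ : G ≃g H) (x y : V) : H.dist (φ x) (φ y) ≤ G.dist x y := by
  by_cases hr : G.Reachable x y
  · obtain ⟨p, hp⟩ := hr.exists_walk_length_eq_dist
    calc H.dist (φ x) (φ y) ≤ (p.map φ.toHom).length := dist_le _
      _ = p.length := by simp
      _ = G.dist x y := hp
  · rw [dist_eq_zero_of_not_reachable hr]
    rw [Nat.le_zero, dist_eq_zero_iff_eq_or_not_reachable]
    right
    rw [φ.reachable_iff]
    exact hr

lemma iso_dist (φ : G ≃g H) (x y : V) : H.dist (φ x) (φ y) = G.dist x y := by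
  refine le_antisymm (iso_dist_le φ x y) ?_
  have := iso_dist_le φ.symm (φ x) (φ y)
  simpa using this

lemma iso_monitors (φ : G ≃g H) {x y : V} {e : Sym2 V} (h : Monitors G x y e) :
    Monitors H (φ x) (φ y) (Sym2.map φ e) := by
  obtain ⟨⟨p, hp, hl⟩, hall⟩ := h
  constructor
  · exact ⟨p.map φ.toHom, Walk.map_isPath_of_injective φ.toEquiv.injective hp,
      by rw [Walk.length_map, hl, iso_dist]⟩
  · intro q hq hlq
    have hx : φ.symm (φ x) = x := φ.symm_apply_apply x
    have hy : φ.symm (φ y) = y := φ.symm_apply_apply y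
    set q' : G.Walk x y := (q.map φ.symm.toHom).copy hx hy with hq'def
    have hq' : q'.IsPath := by
      rw [hq'def, Walk.isPath_copy]
      exact Walk.map_isPath_of_injective φ.symm.toEquiv.injective hq
    have hlq' : q'.length = G.dist x y := by
      rw [hq'def, Walk.length_copy, Walk.length_map, hlq, iso_dist φ x y]
    have hmem : e ∈ q'.edges := hall q' hq' hlq'
    rw [hq'def, Walk.edges_copy, Walk.edges_map] at hmem
    obtain ⟨f', hf', rfl⟩ := List.mem_map.mp hmem
    have hff : Sym2.map (⇑φ) (Sym2.map (⇑φ.symm.toHom) f') = f' := by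
      rw [Sym2.map_map]
      convert congr_fun Sym2.map_id f'
      rename_i z _
      exact φ.apply_symm_apply z
      exact rfl
    rw [hff]
    exact hf'

end IsoInv
section IsoInv2

open SimpleGraph

variable {V W : Type*} {G : SimpleGraph V} {H : SimpleGraph W}

lemma iso_acyclic (φ : G ≃g H) (h : G.IsAcyclic) : H.IsAcyclic := by
  intro v w hw
  exact h (w.map φ.symm.toHom)
    ((Walk.map_isCycle_iff_of_injective φ.symm.toEquiv.injective).mpr hw)

lemma iso_isMEGSet (φ : G ≃g H) {S : Set V} (h : IsMEGSet G S) : IsMEGSet H (⇑φ '' S) := by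
  intro e he
  induction e using Sym2.ind with
  | _ u v =>
    rw [mem_edgeSet] at he
    have he' : G.Adj (φ.symm u) (φ.symm v) := by
      have := φ.symm.map_adj_iff (v := u) (w := v)
      exact this.mpr he
    obtain ⟨x, hx, y, hy, hm⟩ := h s(φ.symm u, φ.symm v) (by rwa [mem_edgeSet])
    refine ⟨φ x, ⟨x, hx, rfl⟩, φ y, ⟨y, hy, rfl⟩, ?_⟩
    have := iso_monitors φ hm
    simpa using this

lemma iso_megNum (φ : G ≃g H) : megNum H = megNum G := by
  unfold megNum
  congr 1
  ext n
  simp only [Set.mem_setOf_eq]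
  constructor
  · rintro ⟨S, hS, rfl⟩
    exact ⟨⇑φ.symm '' S, iso_isMEGSet φ.symm hS,
      Set.ncard_image_of_injective S φ.symm.injective⟩
  · rintro ⟨S, hS, rfl⟩
    exact ⟨⇑φ '' S, iso_isMEGSet φ hS, Set.ncard_image_of_injective S φ.injective⟩

lemma iso_nbhd (φ : G ≃g H) (v : V) : H.neighborSet (φ v) = ⇑φ '' G.neighborSet v := by
  ext w
  simp only [mem_neighborSet, Set.mem_image]
  constructor
  · intro hw
    refine ⟨φ.symm w, ?_, φ.apply_symm_apply w⟩
    rw [← φ.map_adj_iff, φ.apply_symm_apply]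
    exact hw
  · rintro ⟨u, hu, rfl⟩
    exact φ.map_adj_iff.mpr hu

lemma iso_leaves (φ : G ≃g H) : leaves H = ⇑φ '' leaves G := by
  ext w
  simp only [leaves, Set.mem_setOf_eq, Set.mem_image]
  constructor
  · intro hw
    refine ⟨φ.symm w, ?_, φ.apply_symm_apply w⟩
    rw [← hw]
    conv_rhs => rw [← φ.apply_symm_apply w]
    rw [iso_nbhd φ (φ.symm w), Set.ncard_image_of_injective _ φ.injective]
  · rintro ⟨u, hu, rfl⟩
    rw [iso_nbhd φ u, Set.ncard_image_of_injective _ φ.injective]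
    exact hu

lemma iso_leaves_ncard (φ : G ≃g H) : (leaves H).ncard = (leaves G).ncard := by
  rw [iso_leaves φ, Set.ncard_image_of_injective _ φ.injective]

lemma iso_fes_aux (φ : G ≃g H) {n : ℕ}
    (h : ∃ F : Set (Sym2 W), F ⊆ H.edgeSet ∧ (H.deleteEdges F).IsAcyclic ∧ F.ncard = n) :
    ∃ F : Set (Sym2 V), F ⊆ G.edgeSet ∧ (G.deleteEdges F).IsAcyclic ∧ F.ncard = n := by
  obtain ⟨F, hFsub, hFac, rfl⟩ := h
  have hinj : Function.Injective (Sym2.map ⇑φ.symm) :=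
    Sym2.map.injective φ.symm.injective
  refine ⟨Sym2.map ⇑φ.symm '' F, ?_, ?_, Set.ncard_image_of_injective F hinj⟩
  · rintro _ ⟨e, he, rfl⟩
    induction e using Sym2.ind with
    | _ u v =>
      rw [Sym2.map_pair_eq, mem_edgeSet]
      exact φ.symm.map_adj_iff.mpr (hFsub he)
  · have ψ : H.deleteEdges F ≃g G.deleteEdges (Sym2.map ⇑φ.symm '' F) := by
      refine ⟨φ.symm.toEquiv, ?_⟩
      intro x y
      simp only [RelIso.coe_fn_toEquiv, deleteEdges_adj]
      constructor
      · rintro ⟨had, hni⟩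
        refine ⟨φ.symm.map_adj_iff.mp had, fun hmem => hni ?_⟩
        exact ⟨s(x, y), hmem, Sym2.map_pair_eq _ _ _⟩
      · rintro ⟨had, hni⟩
        refine ⟨φ.symm.map_adj_iff.mpr had, fun hmem => hni ?_⟩
        obtain ⟨e, he, heq⟩ := hmem
        have h2 : Sym2.map (⇑φ.symm) s(x, y) = s(φ.symm x, φ.symm y) := Sym2.map_pair_eq _ _ _
        have h3 : e = s(x, y) := hinj (heq.trans h2.symm)
        exact h3 ▸ he
    exact iso_acyclic ψ hFac

lemma iso_fes (φ : G ≃g H) : fes H = fes G := by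
  unfold fes
  congr 1
  ext n
  simp only [Set.mem_setOf_eq]
  exact ⟨fun h => iso_fes_aux φ h, fun h => iso_fes_aux φ.symm h⟩

end IsoInv2
section Chunk5

open SimpleGraph

namespace MEGC
namespace Vtx

variable {k : ℕ}

def flipFun : Vtx k → Vtx k
  | .c => .c
  | .a i => .b i
  | .b i => .a i
  | .m i => .m i

def flip : (G k) ≃g (G k) :=
  ⟨⟨flipFun, flipFun, fun v => by cases v <;> rfl, fun v => by cases v <;> rfl⟩, by
    intro x y
    show (G k).Adj (flipFun x) (flipFun y) ↔ (G k).Adj x y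
    cases x <;> cases y <;> simp [G, Eb, flipFun]⟩

lemma avoidCA (i : Fin k) {x y : Vtx k} (hx : x ≠ .a i) (hy : y ≠ .a i) :
    ∃ q : (G k).Walk x y, q.length = (G k).dist x y ∧ s(.c, .a i) ∉ q.edges := by
  cases x with
  | c =>
    cases y with
    | c => exact ⟨Walk.nil, by simp [SimpleGraph.dist_self], by simp⟩
    | a l =>
      have hl : l ≠ i := fun h => hy (by rw [h])
      exact ⟨Walk.cons adj_ca Walk.nil, by rw [d_ca]; simp [Walk.length_cons], by simp [Ne.symm hl]⟩
    | m l => exact ⟨Walk.cons adj_cb (Walk.cons adj_bm Walk.nil), by rw [d_cm]; simp [Walk.length_cons], by simp⟩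
    | b l => exact ⟨Walk.cons adj_cb Walk.nil, by rw [d_cb]; simp [Walk.length_cons], by simp⟩
  | a j =>
    have hj : j ≠ i := fun h => hx (by rw [h])
    cases y with
    | c => exact ⟨Walk.cons adj_ac Walk.nil, by rw [SimpleGraph.dist_comm, d_ca]; simp [Walk.length_cons], by simp [Ne.symm hj]⟩
    | a l =>
      have hl : l ≠ i := fun h => hy (by rw [h])
      by_cases hjl : j = l
      · subst hjl; exact ⟨Walk.nil, by simp [SimpleGraph.dist_self], by simp⟩
      · exact ⟨Walk.cons adj_ac (Walk.cons adj_ca Walk.nil), by rw [d_aa hjl]; simp [Walk.length_cons],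
          by simp [Ne.symm hj, Ne.symm hl]⟩
    | m l =>
      by_cases hjl : j = l
      · subst hjl; exact ⟨Walk.cons adj_am Walk.nil, by rw [d_am_same]; simp [Walk.length_cons], by simp⟩
      · exact ⟨Walk.cons adj_ac (Walk.cons adj_cb (Walk.cons adj_bm Walk.nil)),
          by rw [d_am hjl]; simp [Walk.length_cons], by simp [Ne.symm hj]⟩
    | b l =>
      exact ⟨Walk.cons adj_ac (Walk.cons adj_cb Walk.nil), by rw [d_ab]; simp [Walk.length_cons], by simp [Ne.symm hj]⟩
  | m j =>
    cases y with
    | c => exact ⟨Walk.cons adj_mb (Walk.cons adj_bc Walk.nil), by rw [SimpleGraph.dist_comm, d_cm]; simp [Walk.length_cons], by simp⟩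
    | a l =>
      have hl : l ≠ i := fun h => hy (by rw [h])
      by_cases hjl : j = l
      · subst hjl; exact ⟨Walk.cons adj_ma Walk.nil, by rw [SimpleGraph.dist_comm, d_am_same]; simp [Walk.length_cons], by simp⟩
      · exact ⟨Walk.cons adj_mb (Walk.cons adj_bc (Walk.cons adj_ca Walk.nil)),
          by rw [SimpleGraph.dist_comm, d_am (Ne.symm hjl)]; simp [Walk.length_cons], by simp [Ne.symm hl]⟩
    | m l =>
      by_cases hjl : j = l
      · subst hjl; exact ⟨Walk.nil, by simp [SimpleGraph.dist_self], by simp⟩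
      · exact ⟨Walk.cons adj_mb (Walk.cons adj_bc (Walk.cons adj_cb (Walk.cons adj_bm Walk.nil))),
          by rw [d_mm hjl]; simp [Walk.length_cons], by simp⟩
    | b l =>
      by_cases hjl : j = l
      · subst hjl; exact ⟨Walk.cons adj_mb Walk.nil, by rw [d_mb_same]; simp [Walk.length_cons], by simp⟩
      · exact ⟨Walk.cons adj_mb (Walk.cons adj_bc (Walk.cons adj_cb Walk.nil)),
          by rw [SimpleGraph.dist_comm, d_bm (Ne.symm hjl)]; simp [Walk.length_cons], by simp⟩
  | b j =>
    cases y with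
    | c => exact ⟨Walk.cons adj_bc Walk.nil, by rw [SimpleGraph.dist_comm, d_cb]; simp [Walk.length_cons], by simp⟩
    | a l =>
      have hl : l ≠ i := fun h => hy (by rw [h])
      exact ⟨Walk.cons adj_bc (Walk.cons adj_ca Walk.nil), by rw [SimpleGraph.dist_comm, d_ab]; simp [Walk.length_cons],
        by simp [Ne.symm hl]⟩
    | m l =>
      by_cases hjl : j = l
      · subst hjl; exact ⟨Walk.cons adj_bm Walk.nil, by rw [SimpleGraph.dist_comm, d_mb_same]; simp [Walk.length_cons], by simp⟩
      · exact ⟨Walk.cons adj_bc (Walk.cons adj_cb (Walk.cons adj_bm Walk.nil)),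
          by rw [d_bm hjl]; simp [Walk.length_cons], by simp⟩
    | b l =>
      by_cases hjl : j = l
      · subst hjl; exact ⟨Walk.nil, by simp [SimpleGraph.dist_self], by simp⟩
      · exact ⟨Walk.cons adj_bc (Walk.cons adj_cb Walk.nil), by rw [d_bb hjl]; simp [Walk.length_cons], by simp⟩

lemma avoidAM (i : Fin k) {x y : Vtx k} (hx : x ≠ .m i) (hy : y ≠ .m i) :
    ∃ q : (G k).Walk x y, q.length = (G k).dist x y ∧ s(.a i, .m i) ∉ q.edges := by
  cases x with
  | c =>
    cases y with
    | c => exact ⟨Walk.nil, by simp [SimpleGraph.dist_self], by simp⟩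
    | a l => exact ⟨Walk.cons adj_ca Walk.nil, by rw [d_ca]; simp [Walk.length_cons], by simp⟩
    | m l =>
      exact ⟨Walk.cons adj_cb (Walk.cons adj_bm Walk.nil), by rw [d_cm]; simp [Walk.length_cons], by simp⟩
    | b l => exact ⟨Walk.cons adj_cb Walk.nil, by rw [d_cb]; simp [Walk.length_cons], by simp⟩
  | a j =>
    cases y with
    | c => exact ⟨Walk.cons adj_ac Walk.nil, by rw [SimpleGraph.dist_comm, d_ca]; simp [Walk.length_cons], by simp⟩
    | a l =>
      by_cases hjl : j = l
      · subst hjl; exact ⟨Walk.nil, by simp [SimpleGraph.dist_self], by simp⟩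
      · exact ⟨Walk.cons adj_ac (Walk.cons adj_ca Walk.nil), by rw [d_aa hjl]; simp [Walk.length_cons], by simp⟩
    | m l =>
      have hl : l ≠ i := fun h => hy (by rw [h])
      by_cases hjl : j = l
      · subst hjl
        exact ⟨Walk.cons adj_am Walk.nil, by rw [d_am_same]; simp [Walk.length_cons], by simp [hl, Ne.symm hl]⟩
      · exact ⟨Walk.cons adj_ac (Walk.cons adj_cb (Walk.cons adj_bm Walk.nil)),
          by rw [d_am hjl]; simp [Walk.length_cons], by simp⟩
    | b l =>
      exact ⟨Walk.cons adj_ac (Walk.cons adj_cb Walk.nil), by rw [d_ab]; simp [Walk.length_cons], by simp⟩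
  | m j =>
    have hj : j ≠ i := fun h => hx (by rw [h])
    cases y with
    | c => exact ⟨Walk.cons adj_mb (Walk.cons adj_bc Walk.nil), by rw [SimpleGraph.dist_comm, d_cm]; simp [Walk.length_cons], by simp⟩
    | a l =>
      by_cases hjl : j = l
      · subst hjl
        exact ⟨Walk.cons adj_ma Walk.nil, by rw [SimpleGraph.dist_comm, d_am_same]; simp [Walk.length_cons], by simp [hj, Ne.symm hj]⟩
      · exact ⟨Walk.cons adj_mb (Walk.cons adj_bc (Walk.cons adj_ca Walk.nil)),
          by rw [SimpleGraph.dist_comm, d_am (Ne.symm hjl)]; simp [Walk.length_cons], by simp⟩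
    | m l =>
      by_cases hjl : j = l
      · subst hjl; exact ⟨Walk.nil, by simp [SimpleGraph.dist_self], by simp⟩
      · exact ⟨Walk.cons adj_mb (Walk.cons adj_bc (Walk.cons adj_cb (Walk.cons adj_bm Walk.nil))),
          by rw [d_mm hjl]; simp [Walk.length_cons], by simp⟩
    | b l =>
      by_cases hjl : j = l
      · subst hjl; exact ⟨Walk.cons adj_mb Walk.nil, by rw [d_mb_same]; simp [Walk.length_cons], by simp⟩
      · exact ⟨Walk.cons adj_mb (Walk.cons adj_bc (Walk.cons adj_cb Walk.nil)),
          by rw [SimpleGraph.dist_comm, d_bm (Ne.symm hjl)]; simp [Walk.length_cons], by simp⟩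
  | b j =>
    cases y with
    | c => exact ⟨Walk.cons adj_bc Walk.nil, by rw [SimpleGraph.dist_comm, d_cb]; simp [Walk.length_cons], by simp⟩
    | a l =>
      exact ⟨Walk.cons adj_bc (Walk.cons adj_ca Walk.nil), by rw [SimpleGraph.dist_comm, d_ab]; simp [Walk.length_cons], by simp⟩
    | m l =>
      have hl : l ≠ i := fun h => hy (by rw [h])
      by_cases hjl : j = l
      · subst hjl
        exact ⟨Walk.cons adj_bm Walk.nil, by rw [SimpleGraph.dist_comm, d_mb_same]; simp [Walk.length_cons], by simp⟩
      · exact ⟨Walk.cons adj_bc (Walk.cons adj_cb (Walk.cons adj_bm Walk.nil)),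
          by rw [d_bm hjl]; simp [Walk.length_cons], by simp⟩
    | b l =>
      by_cases hjl : j = l
      · subst hjl; exact ⟨Walk.nil, by simp [SimpleGraph.dist_self], by simp⟩
      · exact ⟨Walk.cons adj_bc (Walk.cons adj_cb Walk.nil), by rw [d_bb hjl]; simp [Walk.length_cons], by simp⟩

lemma flip_eq_a {i : Fin k} {x : Vtx k} (hx : x ≠ .b i) : flipFun x ≠ .a i := by
  cases x <;> simp_all [flipFun]

lemma avoidCB (i : Fin k) {x y : Vtx k} (hx : x ≠ .b i) (hy : y ≠ .b i) :
    ∃ q : (G k).Walk x y, q.length = (G k).dist x y ∧ s(.c, .b i) ∉ q.edges := by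
  obtain ⟨q, hl, he⟩ := avoidCA i (flip_eq_a hx) (flip_eq_a hy)
  refine ⟨(q.map flip.toHom).copy (by cases x <;> rfl) (by cases y <;> rfl), ?_, ?_⟩
  · rw [Walk.length_copy, Walk.length_map, hl]
    exact iso_dist flip x y
  · intro hmem
    rw [Walk.edges_copy, Walk.edges_map] at hmem
    obtain ⟨e', he', heq⟩ := List.mem_map.mp hmem
    apply he
    have hcomp : ∀ e : Sym2 (Vtx k), Sym2.map flipFun (Sym2.map (⇑flip.toHom) e) = e := by
      intro e
      rw [Sym2.map_map]
      convert congr_fun Sym2.map_id e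
      rename_i z _
      cases z <;> rfl
      exact rfl
    have h2 := congrArg (Sym2.map flipFun) heq
    rw [hcomp, Sym2.map_pair_eq] at h2
    have h3 : e' = s(Vtx.c, Vtx.a i) := by rw [h2]; rfl
    exact h3 ▸ he'

end Vtx
end MEGC

end Chunk5
section Chunk6

open SimpleGraph

namespace MEGC
namespace Vtx

variable {k : ℕ}

lemma forced {T : Set (Vtx k)} (hT : IsMEGSet (G k) T) : {v : Vtx k | v ≠ .c} ⊆ T := by
  intro v hv
  have hmon : ∀ (ed : Sym2 (Vtx k)), ed ∈ (G k).edgeSet →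
      ∀ (w : Vtx k), (∀ x y : Vtx k, x ≠ w → y ≠ w → ∃ q : (G k).Walk x y,
        q.length = (G k).dist x y ∧ ed ∉ q.edges) → w ∈ T := by
    intro ed hed w havoid
    obtain ⟨x, hxT, y, hyT, hm⟩ := hT ed hed
    by_cases hx : x = w
    · exact hx ▸ hxT
    by_cases hy : y = w
    · exact hy ▸ hyT
    obtain ⟨q, hl, he⟩ := havoid x y hx hy
    exact absurd (hm.2 q (q.isPath_of_length_eq_dist hl) hl) he
  cases v with
  | c => simp at hv
  | a i =>
    exact hmon s(.c, .a i) ((G k).mem_edgeSet.mpr adj_ca) (.a i)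
      (fun x y hx hy => avoidCA i hx hy)
  | m i =>
    exact hmon s(.a i, .m i) ((G k).mem_edgeSet.mpr adj_am) (.m i)
      (fun x y hx hy => avoidAM i hx hy)
  | b i =>
    exact hmon s(.c, .b i) ((G k).mem_edgeSet.mpr adj_cb) (.b i)
      (fun x y hx hy => avoidCB i hx hy)

lemma ncard_S : ({v : Vtx k | v ≠ .c} : Set (Vtx k)).ncard = 3 * k := by
  have h1 : {v : Vtx k | v ≠ .c} = (Set.univ \ {Vtx.c} : Set (Vtx k)) := by
    ext v; simp
  rw [h1, Set.ncard_diff (Set.subset_univ _) (Set.toFinite _)]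
  rw [Set.ncard_univ, Nat.card_eq_fintype_card, card_vtx, Set.ncard_singleton]
  omega

lemma megNum_eq (hk : 2 ≤ k) : megNum (G k) = 3 * k := by
  refine le_antisymm (Nat.sInf_le ⟨_, isMEG hk, ncard_S⟩) (le_csInf ⟨3 * k, _, isMEG hk, ncard_S⟩ ?_)
  rintro n ⟨T, hT, rfl⟩
  calc 3 * k = ({v : Vtx k | v ≠ .c} : Set (Vtx k)).ncard := ncard_S.symm
    _ ≤ T.ncard := Set.ncard_le_ncard (forced hT) T.toFinite

lemma leaves_empty (hk : 2 ≤ k) : leaves (G k) = (∅ : Set (Vtx k)) := by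
  set i0 : Fin k := ⟨0, by omega⟩ with hi0
  set i1 : Fin k := ⟨1, by omega⟩ with hi1
  have h0 : i0 ≠ i1 := by simp [hi0, hi1, Fin.ext_iff]
  ext v
  simp only [leaves, Set.mem_setOf_eq, Set.mem_empty_iff_false, iff_false]
  cases v with
  | c =>
    intro h
    have h2 : 1 < ((G k).neighborSet .c).ncard := by
      rw [Set.one_lt_ncard_iff (Set.toFinite _)]
      exact ⟨.a i0, .b i0, by simp [mem_neighborSet], by simp [mem_neighborSet], by simp⟩
    omega
  | a i =>
    intro h
    have h2 : (G k).neighborSet (.a i) = {Vtx.c, Vtx.m i} := by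
      ext w; simp [mem_neighborSet, adj_a]
    rw [h2, Set.ncard_pair (by simp)] at h
    omega
  | m i =>
    intro h
    have h2 : (G k).neighborSet (.m i) = {Vtx.a i, Vtx.b i} := by
      ext w; simp [mem_neighborSet, adj_m]
    rw [h2, Set.ncard_pair (by simp)] at h
    omega
  | b i =>
    intro h
    have h2 : (G k).neighborSet (.b i) = {Vtx.c, Vtx.m i} := by
      ext w; simp [mem_neighborSet, adj_b]
    rw [h2, Set.ncard_pair (by simp)] at h
    omega

end Vtx
end MEGC

end Chunk6
section Chunk7

open SimpleGraph

namespace MEGC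
namespace Vtx

variable {k : ℕ}

def Fdel (k : ℕ) : Set (Sym2 (Vtx k)) := Set.range (fun i : Fin k => s(Vtx.c, Vtx.a i))

lemma reach_invariant {V : Type*} {H : SimpleGraph V} (P : V → Prop)
    (hP : ∀ a b, H.Adj a b → (P a ↔ P b)) {u v : V} (h : H.Reachable u v) : P u ↔ P v := by
  obtain ⟨p⟩ := h
  induction p with
  | nil => exact Iff.rfl
  | cons h q ih => exact (hP _ _ h).trans ih

lemma adjH {x y : Vtx k} (h : ((G k).deleteEdges (Fdel k)).Adj x y) :
    (∃ i, x = .a i ∧ y = .m i) ∨ (∃ i, x = .m i ∧ y = .a i) ∨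
    (∃ i, x = .m i ∧ y = .b i) ∨ (∃ i, x = .b i ∧ y = .m i) ∨
    (∃ i, x = .b i ∧ y = .c) ∨ (∃ i, x = .c ∧ y = .b i) := by
  rw [deleteEdges_adj] at h
  obtain ⟨hG, hF⟩ := h
  cases x with
  | c =>
    rw [adj_c] at hG
    rcases hG with ⟨i, rfl⟩ | ⟨i, rfl⟩
    · exact absurd ⟨i, rfl⟩ hF
    · exact Or.inr (Or.inr (Or.inr (Or.inr (Or.inr ⟨i, rfl, rfl⟩))))
  | a j =>
    rw [adj_a] at hG
    rcases hG with rfl | rfl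
    · exact absurd ⟨j, Sym2.eq_swap⟩ hF
    · exact Or.inl ⟨j, rfl, rfl⟩
  | m j =>
    rw [adj_m] at hG
    rcases hG with rfl | rfl
    · exact Or.inr (Or.inl ⟨j, rfl, rfl⟩)
    · exact Or.inr (Or.inr (Or.inl ⟨j, rfl, rfl⟩))
  | b j =>
    rw [adj_b] at hG
    rcases hG with rfl | rfl
    · exact Or.inr (Or.inr (Or.inr (Or.inr (Or.inl ⟨j, rfl, rfl⟩))))
    · exact Or.inr (Or.inr (Or.inr (Or.inl ⟨j, rfl, rfl⟩)))

lemma nonreach (i : Fin k) (e : Sym2 (Vtx k)) (P : Vtx k → Prop) {u v : Vtx k}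
    (hP1 : ∀ j : Fin k, (P (.a j) ↔ P (.m j)) ∨ s(Vtx.a j, Vtx.m j) = e)
    (hP2 : ∀ j : Fin k, (P (.m j) ↔ P (.b j)) ∨ s(Vtx.m j, Vtx.b j) = e)
    (hP3 : ∀ j : Fin k, (P (.b j) ↔ P .c) ∨ s(Vtx.b j, Vtx.c) = e)
    (hu : P u) (hv : ¬ P v)
    (h : (((G k).deleteEdges (Fdel k)) \ fromEdgeSet {e}).Reachable u v) : False := by
  have key := reach_invariant P ?_ h
  · exact hv (key.mp hu)
  · intro x y hxy
    rw [SimpleGraph.sdiff_adj, SimpleGraph.fromEdgeSet_adj] at hxy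
    obtain ⟨hH, hnotE⟩ := hxy
    have hne : x ≠ y := hH.ne
    have hE : s(x, y) ≠ e := fun hh => hnotE ⟨by simp [hh], hne⟩
    rcases adjH hH with ⟨j, rfl, rfl⟩ | ⟨j, rfl, rfl⟩ | ⟨j, rfl, rfl⟩ |
      ⟨j, rfl, rfl⟩ | ⟨j, rfl, rfl⟩ | ⟨j, rfl, rfl⟩
    · exact (hP1 j).resolve_right hE
    · exact ((hP1 j).resolve_right (fun hh => hE (Sym2.eq_swap.trans hh))).symm
    · exact (hP2 j).resolve_right hE
    · exact ((hP2 j).resolve_right (fun hh => hE (Sym2.eq_swap.trans hh))).symm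
    · exact (hP3 j).resolve_right hE
    · exact ((hP3 j).resolve_right (fun hh => hE (Sym2.eq_swap.trans hh))).symm

lemma spider_acyclic (k : ℕ) : ((G k).deleteEdges (Fdel k)).IsAcyclic := by
  rw [isAcyclic_iff_forall_adj_isBridge]
  intro v w hvw
  rw [isBridge_iff]
  intro hreach
  rcases adjH hvw with ⟨i, rfl, rfl⟩ | ⟨i, rfl, rfl⟩ | ⟨i, rfl, rfl⟩ |
    ⟨i, rfl, rfl⟩ | ⟨i, rfl, rfl⟩ | ⟨i, rfl, rfl⟩
  · -- edge (a i, m i), P z := z = a i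
    refine nonreach i _ (fun z => z = .a i) ?_ ?_ ?_ rfl (by simp) hreach
    · intro j
      by_cases hji : j = i
      · subst hji; exact Or.inr rfl
      · exact Or.inl (by simp [hji])
    · intro j; exact Or.inl (by simp)
    · intro j; exact Or.inl (by simp)
  · refine nonreach i _ (fun z => z = .a i) ?_ ?_ ?_ (by simp) (by simp) hreach.symm
    · intro j
      by_cases hji : j = i
      · subst hji; exact Or.inr Sym2.eq_swap
      · exact Or.inl (by simp [hji])
    · intro j; exact Or.inl (by simp)
    · intro j; exact Or.inl (by simp)
  · -- edge (m i, b i), P z := z = a i ∨ z = m i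
    refine nonreach i _ (fun z => z = .a i ∨ z = .m i) ?_ ?_ ?_ (by simp) (by simp) hreach
    · intro j; exact Or.inl (by by_cases hji : j = i <;> simp [hji])
    · intro j
      by_cases hji : j = i
      · subst hji; exact Or.inr rfl
      · exact Or.inl (by simp [hji])
    · intro j; exact Or.inl (by simp)
  · refine nonreach i _ (fun z => z = .a i ∨ z = .m i) ?_ ?_ ?_ (by simp) (by simp) hreach.symm
    · intro j; exact Or.inl (by by_cases hji : j = i <;> simp [hji])
    · intro j
      by_cases hji : j = i
      · subst hji; exact Or.inr Sym2.eq_swap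
      · exact Or.inl (by simp [hji])
    · intro j; exact Or.inl (by simp)
  · -- edge (b i, c), P z := z = a i ∨ z = m i ∨ z = b i
    refine nonreach i _ (fun z => z = .a i ∨ z = .m i ∨ z = .b i) ?_ ?_ ?_ (by simp) (by simp)
      hreach
    · intro j; exact Or.inl (by by_cases hji : j = i <;> simp [hji])
    · intro j; exact Or.inl (by by_cases hji : j = i <;> simp [hji])
    · intro j
      by_cases hji : j = i
      · subst hji; exact Or.inr rfl
      · exact Or.inl (by simp [hji])
  · refine nonreach i _ (fun z => z = .a i ∨ z = .m i ∨ z = .b i) ?_ ?_ ?_ (by simp) (by simp)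
      hreach.symm
    · intro j; exact Or.inl (by by_cases hji : j = i <;> simp [hji])
    · intro j; exact Or.inl (by by_cases hji : j = i <;> simp [hji])
    · intro j
      by_cases hji : j = i
      · subst hji; exact Or.inr Sym2.eq_swap
      · exact Or.inl (by simp [hji])

lemma Fdel_sub (k : ℕ) : Fdel k ⊆ (G k).edgeSet := by
  rintro _ ⟨i, rfl⟩
  exact (G k).mem_edgeSet.mpr adj_ca

lemma Fdel_ncard (k : ℕ) : (Fdel k).ncard = k := by
  have hinj : Function.Injective (fun i : Fin k => s(Vtx.c, Vtx.a i)) := by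
    intro i j h
    simpa using h
  rw [Fdel, ← Set.image_univ, Set.ncard_image_of_injective _ hinj, Set.ncard_univ,
    Nat.card_eq_fintype_card, Fintype.card_fin]

lemma cyc_hit {F : Set (Sym2 (Vtx k))} (hac : ((G k).deleteEdges F).IsAcyclic) (i : Fin k) :
    s(Vtx.c, Vtx.a i) ∈ F ∨ s(Vtx.a i, Vtx.m i) ∈ F ∨
    s(Vtx.m i, Vtx.b i) ∈ F ∨ s(Vtx.b i, Vtx.c) ∈ F := by
  by_contra h
  push_neg at h
  obtain ⟨h1, h2, h3, h4⟩ := h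
  have e1 : ((G k).deleteEdges F).Adj .c (.a i) := deleteEdges_adj.mpr ⟨adj_ca, h1⟩
  have e2 : ((G k).deleteEdges F).Adj (.a i) (.m i) := deleteEdges_adj.mpr ⟨adj_am, h2⟩
  have e3 : ((G k).deleteEdges F).Adj (.m i) (.b i) := deleteEdges_adj.mpr ⟨adj_mb, h3⟩
  have e4 : ((G k).deleteEdges F).Adj (.b i) .c := deleteEdges_adj.mpr ⟨adj_bc, h4⟩
  refine hac (Walk.cons e1 (Walk.cons e2 (Walk.cons e3 (Walk.cons e4 Walk.nil)))) ?_
  rw [Walk.isCycle_def, Walk.isTrail_def]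
  refine ⟨?_, by simp, ?_⟩
  · simp [Walk.edges_cons]
  · simp [Walk.support_cons]

lemma fes_lower {F : Set (Sym2 (Vtx k))} (hsub : F ⊆ (G k).edgeSet)
    (hac : ((G k).deleteEdges F).IsAcyclic) : k ≤ F.ncard := by
  have hch : ∀ i : Fin k, ∃ e, e ∈ F ∧ (e = s(Vtx.c, Vtx.a i) ∨ e = s(Vtx.a i, Vtx.m i) ∨
      e = s(Vtx.m i, Vtx.b i) ∨ e = s(Vtx.b i, Vtx.c)) := by
    intro i
    rcases cyc_hit hac i with h | h | h | h
    · exact ⟨_, h, Or.inl rfl⟩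
    · exact ⟨_, h, Or.inr (Or.inl rfl)⟩
    · exact ⟨_, h, Or.inr (Or.inr (Or.inl rfl))⟩
    · exact ⟨_, h, Or.inr (Or.inr (Or.inr rfl))⟩
  choose f hfF hfC using hch
  have hinj : Function.Injective f := by
    intro i j hij
    have hi := hfC i
    have hj := hfC j
    rw [hij] at hi
    by_contra hne
    rcases hi with h | h | h | h <;> rcases hj with h' | h' | h' | h' <;> rw [h] at h' <;>
      simp_all
  calc k = (Set.univ : Set (Fin k)).ncard := by
        rw [Set.ncard_univ, Nat.card_eq_fintype_card, Fintype.card_fin]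
    _ = (f '' Set.univ).ncard := (Set.ncard_image_of_injective _ hinj).symm
    _ ≤ F.ncard := Set.ncard_le_ncard (by rintro _ ⟨i, _, rfl⟩; exact hfF i) F.toFinite

lemma fes_eq (k : ℕ) : fes (G k) = k := by
  refine le_antisymm (Nat.sInf_le ⟨Fdel k, Fdel_sub k, spider_acyclic k, Fdel_ncard k⟩)
    (le_csInf ⟨k, Fdel k, Fdel_sub k, spider_acyclic k, Fdel_ncard k⟩ ?_)
  rintro n ⟨F, h1, h2, rfl⟩
  exact fes_lower h1 h2

end Vtx
end MEGC

end Chunk7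

open MEGC
theorem exists_graph_fes_tight (k : ℕ) (hk : 2 ≤ k) :
    ∃ (n : ℕ) (G : SimpleGraph (Fin n)), G.Connected ∧ fes G = k ∧
      megNum G = 3 * k + (leaves G).ncard := by
  classical
  refine ⟨Fintype.card (Vtx k),
    (MEGC.G k).comap (Fintype.equivFin (Vtx k)).symm.toEmbedding, ?_, ?_, ?_⟩
  all_goals
    have φ : (MEGC.G k).comap (Fintype.equivFin (Vtx k)).symm.toEmbedding ≃g MEGC.G k :=
      SimpleGraph.Iso.comap (Fintype.equivFin (Vtx k)).symm (MEGC.G k)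
  · exact φ.connected_iff.mpr (Vtx.conn k)
  · rw [← iso_fes φ]
    exact Vtx.fes_eq k
  · have h1 : (leaves ((MEGC.G k).comap
        (Fintype.equivFin (Vtx k)).symm.toEmbedding)).ncard = 0 := by
      rw [← iso_leaves_ncard φ, Vtx.leaves_empty hk]
      simp
    rw [h1, ← iso_megNum φ, Vtx.megNum_eq hk]
    omega
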